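/- Every maximal (non-extendable) directed walk in the rule supernetwork Υ starting from any network either terminates at a pairwise stable network, or eventually enters and remains in a basin containing at least two networks. In particular, if all basins are singletons, every sufficiently long sequence of permitted network formation operations reaches a pairwise stable network. -/
import Mathlib


/-- Path dominance: a finite directed path in the rule supernetwork `Υ` from `G` to `G'`. -/
def nfgReach {𝔾 : Type*} (Υ : 𝔾 → 𝔾 → Prop) (G G' : 𝔾) : Prop :=
  Relation.ReflTransGen Υ G G'

/-- A basin: a path-equivalence class with no outgoing edges in the acyclic supernetwork. -/
def nfgIsBasin {𝔾 : Type*} (Υ : 𝔾 → 𝔾 → Prop) (B : Set 𝔾) : Prop :=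
  ∃ G : 𝔾, B = {G' | nfgReach Υ G G' ∧ nfgReach Υ G' G} ∧
    ∀ G', nfgReach Υ G G' → nfgReach Υ G' G

/-- A maximal directed walk in `Υ`: at each step either a permitted operation is performed,
or the current network has no outgoing edges (it is non-extendable) and the walk stays put. -/
def nfgMaxWalk {𝔾 : Type*} (Υ : 𝔾 → 𝔾 → Prop) (g : ℕ → 𝔾) : Prop :=
  ∀ k, Υ (g k) (g (k + 1)) ∨ ((∀ y, ¬ Υ (g k) y) ∧ g (k + 1) = g k)

/-- Fairness (modelling the random turns of the network formation process): any operation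
available infinitely often is eventually taken, i.e. if `Υ x y` and `x` is visited
infinitely often then `y` is visited infinitely often. -/
def nfgFair {𝔾 : Type*} (Υ : 𝔾 → 𝔾 → Prop) (g : ℕ → 𝔾) : Prop :=
  ∀ x y, Υ x y → (∀ n, ∃ m, n ≤ m ∧ g m = x) → ∀ n, ∃ m, n ≤ m ∧ g m = y

/-- Every maximal (fair) directed walk in the finite rule supernetwork `Υ` (no self-loops)
either terminates at a pairwise stable network, or eventually enters and remains in a basin
containing at least two networks.  In particular, if all basins are singletons, every
sufficiently long sequence of permitted operations reaches a pairwise stable network. -/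
theorem maximal_walk_stable_or_nontrivial_basin {𝔾 : Type*} [Fintype 𝔾]
    (Υ : 𝔾 → 𝔾 → Prop) (hirr : ∀ G, ¬ Υ G G)
    (g : ℕ → 𝔾) (hwalk : nfgMaxWalk Υ g) (hfair : nfgFair Υ g) :
    ((∃ n, ∀ y, ¬ Υ (g n) y) ∨
      (∃ B : Set 𝔾, nfgIsBasin Υ B ∧ B.Nontrivial ∧ ∃ n, ∀ k, n ≤ k → g k ∈ B)) ∧
    ((∀ B : Set 𝔾, nfgIsBasin Υ B → ∃ x, B = {x}) → ∃ n, ∀ y, ¬ Υ (g n) y) := by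
  classical
  -- the set of infinitely visited states
  set B : Set 𝔾 := {x | ∀ n, ∃ m, n ≤ m ∧ g m = x} with hBdef
  -- the walk connects earlier points to later points
  have reach_walk : ∀ m n, m ≤ n → nfgReach Υ (g m) (g n) := by
    intro m n hmn
    induction n, hmn using Nat.le_induction with
    | base => exact Relation.ReflTransGen.refl
    | succ n hmn ih =>
      rcases hwalk n with h | ⟨_, h⟩
      · exact ih.tail h
      · rw [h]; exact ih
  -- B is nonempty
  have hBne : ∃ x, x ∈ B := by
    have : ¬ ∀ x : 𝔾, ∃ n, ∀ m, n ≤ m → g m ≠ x := by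
      intro h
      choose f hf using h
      set N := Finset.univ.sup f with hN
      exact hf (g N) N (Finset.le_sup (Finset.mem_univ _)) rfl
    push_neg at this
    rcases this with ⟨x, hx⟩
    exact ⟨x, fun n => by rcases hx n with ⟨m, hm, hgm⟩; exact ⟨m, hm, hgm⟩⟩
  -- B is closed under Υ-steps (fairness) and hence under reachability
  have hstep : ∀ x ∈ B, ∀ y, Υ x y → y ∈ B := fun x hx y hxy => hfair x y hxy hx
  have hclosed : ∀ x ∈ B, ∀ z, nfgReach Υ x z → z ∈ B := by
    intro x hx z hxz
    induction hxz with
    | refl => exact hx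
    | tail _ h ih => exact hstep _ ih _ h
  -- any two members of B reach each other
  have hmutual : ∀ x ∈ B, ∀ y ∈ B, nfgReach Υ x y := by
    intro x hx y hy
    rcases hx 0 with ⟨m, _, hm⟩
    rcases hy m with ⟨m', hmm', hm'⟩
    rw [← hm, ← hm']
    exact reach_walk m m' hmm'
  -- eventually the walk remains in B
  have heventual : ∃ n, ∀ k, n ≤ k → g k ∈ B := by
    have hchoice : ∀ x : 𝔾, ∃ n, x ∉ B → ∀ m, n ≤ m → g m ≠ x := by
      intro x
      by_cases hx : x ∈ B
      · exact ⟨0, fun h => absurd hx h⟩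
      · have : ¬ ∀ n, ∃ m, n ≤ m ∧ g m = x := hx
        push_neg at this
        rcases this with ⟨n, hn⟩
        exact ⟨n, fun _ m hm => hn m hm⟩
    choose f hf using hchoice
    refine ⟨Finset.univ.sup f, fun k hk => ?_⟩
    by_contra hgk
    exact hf (g k) hgk k (le_trans (Finset.le_sup (Finset.mem_univ _)) hk) rfl
  have main : (∃ n, ∀ y, ¬ Υ (g n) y) ∨
      (∃ B' : Set 𝔾, nfgIsBasin Υ B' ∧ B'.Nontrivial ∧ ∃ n, ∀ k, n ≤ k → g k ∈ B') := by
    by_cases h1 : ∃ x ∈ B, ∀ y, ¬ Υ x y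
    · rcases h1 with ⟨x, hx, hxy⟩
      rcases hx 0 with ⟨m, _, hm⟩
      exact Or.inl ⟨m, hm ▸ hxy⟩
    · push_neg at h1
      rcases hBne with ⟨G, hG⟩
      refine Or.inr ⟨B, ⟨G, ?_, ?_⟩, ?_, heventual⟩
      · ext x
        constructor
        · intro hx
          exact ⟨hmutual G hG x hx, hmutual x hx G hG⟩
        · intro ⟨hGx, _⟩
          exact hclosed G hG x hGx
      · intro G' hGG'
        exact hmutual G' (hclosed G hG G' hGG') G hG
      · rcases h1 G hG with ⟨y, hy⟩
        exact ⟨G, hG, y, hstep G hG y hy, fun h => hirr G (h ▸ hy)⟩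
  refine ⟨main, fun hsing => ?_⟩
  rcases main with h | ⟨B', hB', hnt, _⟩
  · exact h
  · rcases hsing B' hB' with ⟨x, rfl⟩
    exact (hnt.ne_singleton rfl).elim
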